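/- For the truncated exponential family π_α(x) = α·exp(−α x)/(1 − exp(−α)) on [0,1], the hazard rate λ_α(x) = π_α(x)/(1 − Π_α(x)) equals α·exp(−α x)/(exp(−α x) − exp(−α)) and is: (i) strictly increasing in x on [0,1), and (ii) strictly increasing in α for each fixed x ∈ [0,1). Consequently the family satisfies the generalized monotone hazard rate condition: if x ≥ x' and α > α', then λ_α(x) > λ_{α'}(x'). -/

import Mathlib

/-- Hazard rate of the truncated exponential distribution with parameter `α` on `[0,1]`. -/
noncomputable def hazard (α x : ℝ) : ℝ :=
  α * Real.exp (-α * x) / (Real.exp (-α * x) - Real.exp (-α))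

lemma haz_eq (α x : ℝ) : hazard α x = α / (1 - Real.exp ((x - 1) * α)) := by
  unfold hazard
  have h : Real.exp (-α) = Real.exp (-α * x) * Real.exp ((x - 1) * α) := by
    rw [← Real.exp_add]; ring_nf
  rw [h, show Real.exp (-α * x) - Real.exp (-α * x) * Real.exp ((x - 1) * α)
      = Real.exp (-α * x) * (1 - Real.exp ((x - 1) * α)) by ring,
    mul_comm α (Real.exp (-α * x)), mul_div_mul_left _ _ (Real.exp_ne_zero _)]

lemma denom_pos {α x : ℝ} (hα : 0 < α) (hx : x < 1) :
    0 < 1 - Real.exp ((x - 1) * α) := by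
  have : (x - 1) * α < 0 := mul_neg_of_neg_of_pos (by linarith) hα
  have := Real.exp_lt_one_iff.mpr this
  linarith

lemma haz_mono_x {α : ℝ} (hα : 0 < α) : StrictMonoOn (hazard α) (Set.Ico (0:ℝ) 1) := by
  intro x hx y hy hxy
  rw [haz_eq, haz_eq]
  have hgy := denom_pos hα hy.2
  have hlt : Real.exp ((x - 1) * α) < Real.exp ((y - 1) * α) := by
    apply Real.exp_lt_exp.mpr
    have : x - 1 < y - 1 := by linarith
    exact mul_lt_mul_of_pos_right this hα
  exact div_lt_div_of_pos_left hα hgy (by linarith)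

lemma haz_mono_alpha {x : ℝ} (hx : x < 1) :
    StrictMonoOn (fun α => hazard α x) (Set.Ioi (0:ℝ)) := by
  have hEq : Set.EqOn (fun α => hazard α x)
      (fun α => α / (1 - Real.exp ((x - 1) * α))) (Set.Ioi 0) := fun α _ => haz_eq α x
  have key : ∀ α ∈ Set.Ioi (0:ℝ),
      HasDerivAt (fun α => α / (1 - Real.exp ((x - 1) * α)))
        ((1 * (1 - Real.exp ((x - 1) * α)) - α * -(Real.exp ((x - 1) * α) * (x - 1)))
          / (1 - Real.exp ((x - 1) * α)) ^ 2) α := by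
    intro α hα
    have h1 : HasDerivAt (fun a : ℝ => (x - 1) * a) (x - 1) α := by
      simpa using (hasDerivAt_id α).const_mul (x - 1)
    have h2 := h1.exp
    have h3 : HasDerivAt (fun a : ℝ => 1 - Real.exp ((x - 1) * a))
        (-(Real.exp ((x - 1) * α) * (x - 1))) α := h2.const_sub 1
    exact (hasDerivAt_id α).div h3 (ne_of_gt (denom_pos hα hx))
  have hpos : ∀ α ∈ Set.Ioi (0:ℝ),
      0 < (1 * (1 - Real.exp ((x - 1) * α)) - α * -(Real.exp ((x - 1) * α) * (x - 1)))
          / (1 - Real.exp ((x - 1) * α)) ^ 2 := by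
    intro α hα
    rw [Set.mem_Ioi] at hα
    set s := (x - 1) * α with hs
    have hs0 : s ≠ 0 := ne_of_lt (mul_neg_of_neg_of_pos (by linarith) hα)
    have h1 : -s + 1 < Real.exp (-s) := Real.add_one_lt_exp (by simpa using hs0)
    have hnum : 0 < 1 * (1 - Real.exp s) - α * -(Real.exp s * (x - 1)) := by
      have : (1 - s) * Real.exp s < Real.exp (-s) * Real.exp s := by
        apply mul_lt_mul_of_pos_right _ (Real.exp_pos s)
        linarith
      rw [← Real.exp_add] at this
      simp only [neg_add_cancel, Real.exp_zero] at this
      have hαs : α * -(Real.exp s * (x - 1)) = -(s * Real.exp s) := by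
        rw [hs]; ring
      rw [one_mul, hαs]
      nlinarith
    exact div_pos hnum (pow_pos (denom_pos hα hx) 2)
  have hmono : StrictMonoOn (fun α => α / (1 - Real.exp ((x - 1) * α))) (Set.Ioi 0) := by
    apply strictMonoOn_of_deriv_pos (convex_Ioi 0)
    · exact fun α hα => ((key α hα).continuousAt).continuousWithinAt
    · intro α hα
      rw [interior_Ioi] at hα
      rw [(key α hα).deriv]
      exact hpos α hα
  exact hmono.congr hEq.symm

theorem stmt13 :
    (∀ α : ℝ, 0 < α → ∀ x ∈ Set.Ico (0:ℝ) 1,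
      (α * Real.exp (-α * x) / (1 - Real.exp (-α))) /
          (1 - (1 - Real.exp (-α * x)) / (1 - Real.exp (-α)))
        = hazard α x) ∧
    (∀ α : ℝ, 0 < α → StrictMonoOn (hazard α) (Set.Ico (0:ℝ) 1)) ∧
    (∀ x ∈ Set.Ico (0:ℝ) 1, ∀ α' α : ℝ, 0 < α' → α' < α →
      hazard α' x < hazard α x) ∧
    (∀ α' α : ℝ, 0 < α' → α' < α →
      ∀ x' ∈ Set.Ico (0:ℝ) 1, ∀ x ∈ Set.Ico (0:ℝ) 1, x' ≤ x →
        hazard α' x' < hazard α x) := by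
  refine ⟨?_, fun α hα => haz_mono_x hα, ?_, ?_⟩
  · intro α hα x hx
    have h1 : (0:ℝ) < 1 - Real.exp (-α) := by
      have := Real.exp_lt_one_iff.mpr (neg_neg_iff_pos.mpr hα)
      linarith
    have h2 : (0:ℝ) < Real.exp (-α * x) - Real.exp (-α) := by
      have : -α < -α * x := by nlinarith [hx.2]
      have := Real.exp_lt_exp.mpr this
      linarith
    unfold hazard
    field_simp
    rw [show 1 - Real.exp (-α) - (1 - Real.exp (-(α * x))) = Real.exp (-(α * x)) - Real.exp (-α) by ring]
  · intro x hx α' α hα' hαα'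
    exact haz_mono_alpha hx.2 (Set.mem_Ioi.mpr hα') (Set.mem_Ioi.mpr (hα'.trans hαα')) hαα'
  · intro α' α hα' hαα' x' hx' x hx hxx'
    have h1 : hazard α' x' ≤ hazard α' x := (haz_mono_x hα').monotoneOn hx' hx hxx'
    have h2 : hazard α' x < hazard α x :=
      haz_mono_alpha hx.2 (Set.mem_Ioi.mpr hα') (Set.mem_Ioi.mpr (hα'.trans hαα')) hαα'
    linarith
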